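/- Let K be a totally real number field with ring of integers O_K, let α ∈ O_K be totally positive, and suppose there exists a totally positive δ in the codifferent of O_K with Tr(αδ) = 1. Then α is indecomposable: α cannot be written as β + γ with β, γ totally positive elements of O_K. -/
import Mathlib

open NumberField in
lemma trace_pos_of_totally_pos (K : Type*) [Field K] [NumberField K]
    (htotreal : ∀ v : InfinitePlace K, v.IsReal)
    (x : K) (hx : ∀ φ : K →+* ℝ, 0 < φ x) : 0 < Algebra.trace ℚ K x := by
  have h := trace_eq_sum_embeddings (K := ℚ) (L := K) (E := ℂ) (x := x)
  have hre : ∀ σ : K →ₐ[ℚ] ℂ, ∃ r : ℝ, 0 < r ∧ σ x = (r : ℂ) := by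
    intro σ
    have hreal : ComplexEmbedding.IsReal (σ.toRingHom) := by
      have := htotreal (InfinitePlace.mk σ.toRingHom)
      rwa [InfinitePlace.isReal_mk_iff] at this
    refine ⟨hreal.embedding x, hx _, ?_⟩
    exact (ComplexEmbedding.IsReal.coe_embedding_apply hreal x).symm
  have hpos : 0 < (algebraMap ℚ ℂ (Algebra.trace ℚ K x)).re := by
    rw [h, Complex.re_sum]
    apply Finset.sum_pos
    · intro σ _
      obtain ⟨r, hr, hσ⟩ := hre σ
      simp [hσ, hr]
    · have : Nonempty (K →ₐ[ℚ] ℂ) := ⟨IsAlgClosed.lift⟩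
      exact Finset.univ_nonempty
  have : (algebraMap ℚ ℂ (Algebra.trace ℚ K x)).re = ((Algebra.trace ℚ K x : ℚ) : ℝ) := by
    simp [Complex.ofReal_ratCast]
  rw [this] at hpos
  exact_mod_cast hpos

open NumberField in
theorem trace_one_implies_indecomposable (K : Type*) [Field K] [NumberField K]
    (htotreal : ∀ v : InfinitePlace K, v.IsReal)
    (α : K) (hαint : IsIntegral ℤ α) (hαpos : ∀ φ : K →+* ℝ, 0 < φ α)
    (δ : K)
    (hδcod : ∀ β : K, IsIntegral ℤ β → ∃ t : ℤ, Algebra.trace ℚ K (δ * β) = t)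
    (hδpos : ∀ φ : K →+* ℝ, 0 < φ δ)
    (htrace : Algebra.trace ℚ K (α * δ) = 1) :
    ¬ ∃ β γ : K, IsIntegral ℤ β ∧ IsIntegral ℤ γ ∧
      (∀ φ : K →+* ℝ, 0 < φ β) ∧ (∀ φ : K →+* ℝ, 0 < φ γ) ∧ α = β + γ := by
  rintro ⟨β, γ, hβint, hγint, hβpos, hγpos, hsum⟩
  have key : ∀ x : K, IsIntegral ℤ x → (∀ φ : K →+* ℝ, 0 < φ x) →
      1 ≤ Algebra.trace ℚ K (δ * x) := by
    intro x hxint hxpos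
    obtain ⟨t, ht⟩ := hδcod x hxint
    have hpos : 0 < Algebra.trace ℚ K (δ * x) :=
      trace_pos_of_totally_pos K htotreal _ (fun φ => by rw [map_mul]; exact mul_pos (hδpos φ) (hxpos φ))
    rw [ht] at hpos ⊢
    have : 0 < t := by exact_mod_cast hpos
    exact_mod_cast this
  have h1 := key β hβint hβpos
  have h2 := key γ hγint hγpos
  have : Algebra.trace ℚ K (α * δ) = Algebra.trace ℚ K (δ * β) + Algebra.trace ℚ K (δ * γ) := by
    rw [mul_comm, hsum, mul_add, map_add]
  rw [htrace] at this
  linarith
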